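/- arXiv:1005.4806 — 3 statements merged into one kernel-verified Lean document; each statement's English description precedes it below -/
import Mathlib

section
/- For integers u < v, the event A⁺_{u,v} that u leads to every vertex j ∈ {u+1, ..., v} by a directed path equals the event that for every j ∈ {u+1, ..., v}, some i ∈ {u, ..., j−1} has an edge to j; equivalently A⁺_{u,v} = {ξ(u+1) ≤ 1, ξ(u+2) ≤ 2, ..., ξ(v) ≤ v−u}, an intersection of v−u independent events. -/
open MeasureTheory ProbabilityTheory Filter

/-- Configuration: edge indicators. -/
abbrev Cfg := ℤ → ℤ → Bool

/-- There is an edge from `i` to `j`. -/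
def Edge (ω : Cfg) (i j : ℤ) : Prop := i < j ∧ ω i j = true

/-- There is a directed path from `i` to `j`. -/
def Leads (ω : Cfg) : ℤ → ℤ → Prop := Relation.TransGen (Edge ω)

/-- A list of vertices forming a path inside `{a,...,b}`. -/
def IsPathIn (ω : Cfg) (a b : ℤ) (l : List ℤ) : Prop :=
  l ≠ [] ∧ l.Chain' (Edge ω) ∧ ∀ x ∈ l, a ≤ x ∧ x ≤ b

/-- `L ω a b`: maximal number of edges of a path contained in `{a,...,b}`. -/
noncomputable def L (ω : Cfg) (a b : ℤ) : ℕ :=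
  sSup {n | ∃ l : List ℤ, IsPathIn ω a b l ∧ l.length = n + 1}

/-- `T ω i j`: maximal number of edges of a path from `i` to `j` (0 if none). -/
noncomputable def T (ω : Cfg) (i j : ℤ) : ℕ :=
  sSup {n | ∃ l : List ℤ, l.Chain' (Edge ω) ∧ l.head? = some i ∧
    l.getLast? = some j ∧ l.length = n + 1}

/-- The skeleton of the graph. -/
def Skel (ω : Cfg) : Set ℤ :=
  {n | (∀ j, n < j → Leads ω n j) ∧ (∀ j, j < n → Leads ω j n)}

/-- The model hypotheses: independent edges, edge `(i,j)` present w.p. `p (j-i)`. -/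
def GraphModel (p : ℕ → ℝ) (μ : Measure Cfg) : Prop :=
  IsProbabilityMeasure μ ∧
  iIndepFun
    (fun (e : ℤ × ℤ) (ω : Cfg) => ω e.1 e.2) μ ∧
  (∀ i j : ℤ, i < j → μ {ω | ω i j = true} = ENNReal.ofReal (p (j - i).toNat)) ∧
  (∀ i j : ℤ, j ≤ i → μ {ω | ω i j = true} = 0)

noncomputable def xi (ω : Cfg) (j : ℤ) : ℕ :=
  sInf {n : ℕ | 0 < n ∧ Edge ω (j - n) j}

/-! ### Auxiliary lemmas -/

lemma aux_refl_le (ω : Cfg) {a b : ℤ} (h : Relation.ReflTransGen (Edge ω) a b) : a ≤ b := by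
  induction h with
  | refl => exact le_refl _
  | tail _ hbc ih => exact le_trans ih (le_of_lt hbc.1)

lemma aux_leads_last (ω : Cfg) {a c : ℤ} (h : Leads ω a c) :
    ∃ b, a ≤ b ∧ Edge ω b c := by
  obtain ⟨b, hab, hbc⟩ := (Relation.TransGen.tail'_iff).mp h
  exact ⟨b, aux_refl_le ω hab, hbc⟩

lemma aux_leads_of_edges (ω : Cfg) (u v : ℤ)
    (H : ∀ j, u < j → j ≤ v → ∃ i, u ≤ i ∧ i < j ∧ Edge ω i j) :
    ∀ j, u < j → j ≤ v → Leads ω u j := by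
  have key : ∀ n : ℕ, ∀ j, u < j → j ≤ v → (j - u).toNat ≤ n → Leads ω u j := by
    intro n
    induction n with
    | zero =>
      intro j huj _ hn
      exfalso; omega
    | succ n ih =>
      intro j huj hjv hn
      obtain ⟨i, hui, hij, he⟩ := H j huj hjv
      rcases eq_or_lt_of_le hui with rfl | hui'
      · exact Relation.TransGen.single he
      · have : Leads ω u i := ih i hui' (le_trans (le_of_lt hij) hjv) (by omega)
        exact this.tail he
  intro j huj hjv
  exact key (j - u).toNat j huj hjv le_rfl

lemma aux_xi_iff (ω : Cfg) (u j : ℤ) (huj : u < j) :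
    (∃ i, u ≤ i ∧ i < j ∧ Edge ω i j) ↔ (0 < xi ω j ∧ (xi ω j : ℤ) ≤ j - u) := by
  constructor
  · rintro ⟨i, hui, hij, he⟩
    set n := (j - i).toNat with hn
    have hni : (n : ℤ) = j - i := by omega
    have hmem : n ∈ {n : ℕ | 0 < n ∧ Edge ω (j - n) j} := by
      constructor
      · omega
      · have : j - (n:ℤ) = i := by omega
        rw [this]; exact he
    have hne : {n : ℕ | 0 < n ∧ Edge ω (j - n) j}.Nonempty := ⟨n, hmem⟩
    have hin := Nat.sInf_mem hne
    refine ⟨hin.1, ?_⟩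
    have hle := Nat.sInf_le hmem
    have : (xi ω j : ℤ) ≤ (n : ℤ) := by exact_mod_cast hle
    omega
  · rintro ⟨hpos, hle⟩
    have hne : {n : ℕ | 0 < n ∧ Edge ω (j - n) j}.Nonempty := by
      by_contra h
      rw [Set.not_nonempty_iff_eq_empty] at h
      have : xi ω j = 0 := by rw [xi, h, Nat.sInf_empty]
      omega
    have hin := Nat.sInf_mem hne
    exact ⟨j - xi ω j, by omega, by omega, hin.2⟩

/-! ### Independence machinery -/

noncomputable def Mcoord (e : ℤ × ℤ) : MeasurableSpace Cfg :=
  MeasurableSpace.comap (fun ω : Cfg => ω e.1 e.2) (inferInstance : MeasurableSpace Bool)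

noncomputable def MA (u : ℤ) (A : Set ℤ) : MeasurableSpace Cfg :=
  ⨆ (e : ℤ × ℤ) (_ : e ∈ {e : ℤ × ℤ | e.2 ∈ A ∧ u ≤ e.1}), Mcoord e

lemma aux_mcoord_meas (i j : ℤ) : Measurable (fun ω : Cfg => ω i j) :=
  (measurable_pi_apply j).comp (measurable_pi_apply i)

lemma aux_mcoord_le (e : ℤ × ℤ) : Mcoord e ≤ (inferInstance : MeasurableSpace Cfg) :=
  (aux_mcoord_meas e.1 e.2).comap_le

lemma aux_mA_le (u : ℤ) (A : Set ℤ) : MA u A ≤ (inferInstance : MeasurableSpace Cfg) :=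
  iSup₂_le fun e _ => aux_mcoord_le e

def Su (u j : ℤ) : Set Cfg := {ω : Cfg | ∃ i, u ≤ i ∧ i < j ∧ Edge ω i j}

lemma aux_Su_eq (u j : ℤ) :
    Su u j = ⋃ i ∈ Set.Ico u j, (fun ω : Cfg => ω i j) ⁻¹' {true} := by
  ext ω
  simp only [Su, Set.mem_setOf_eq, Set.mem_iUnion, Set.mem_Ico, Set.mem_preimage,
    Set.mem_singleton_iff, Edge]
  constructor
  · rintro ⟨i, h1, h2, _, h4⟩; exact ⟨i, ⟨h1, h2⟩, h4⟩
  · rintro ⟨i, ⟨h1, h2⟩, h3⟩; exact ⟨i, h1, h2, h2, h3⟩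

lemma aux_coord_meas_comap (e : ℤ × ℤ) :
    MeasurableSet[Mcoord e] ((fun ω : Cfg => ω e.1 e.2) ⁻¹' {true}) :=
  ⟨{true}, measurableSet_singleton true, rfl⟩

lemma aux_Su_meas_MA (u : ℤ) (A : Set ℤ) (j : ℤ) (hj : j ∈ A) :
    MeasurableSet[MA u A] (Su u j) := by
  rw [aux_Su_eq]
  refine MeasurableSet.biUnion (Set.to_countable _) (fun i hi => ?_)
  have hle : Mcoord (i, j) ≤ MA u A := by
    apply le_iSup₂ (f := fun (e : ℤ × ℤ) (_ : e ∈ {e : ℤ × ℤ | e.2 ∈ A ∧ u ≤ e.1}) => Mcoord e)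
      (i, j) ⟨hj, hi.1⟩
  exact hle _ (aux_coord_meas_comap (i, j))

lemma aux_Su_meas (u j : ℤ) : MeasurableSet (Su u j) :=
  aux_mA_le u {j} _ (aux_Su_meas_MA u {j} j rfl)

lemma aux_indep_groups {p : ℕ → ℝ} {μ : Measure Cfg} (u : ℤ) (hmodel : GraphModel p μ)
    {A B : Set ℤ} (hAB : Disjoint A B) : Indep (MA u A) (MA u B) μ := by
  have hI : iIndep Mcoord μ := hmodel.2.1.iIndep
  have hdisj : Disjoint {e : ℤ × ℤ | e.2 ∈ A ∧ u ≤ e.1} {e : ℤ × ℤ | e.2 ∈ B ∧ u ≤ e.1} := by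
    rw [Set.disjoint_left]
    rintro e ⟨heA, -⟩ ⟨heB, -⟩
    exact hAB.le_bot ⟨heA, heB⟩
  exact indep_iSup_of_disjoint (fun e => aux_mcoord_le e) hI hdisj

lemma aux_prod_formula {p : ℕ → ℝ} {μ : Measure Cfg} (u v : ℤ) (hmodel : GraphModel p μ)
    (t : Finset ↑(Finset.Ioc u v)) :
    μ (⋂ j ∈ t, Su u (j : ℤ)) = ∏ j ∈ t, μ (Su u (j : ℤ)) := by
  haveI := hmodel.1
  classical
  induction t using Finset.induction_on with
  | empty => simp
  | insert j0 t hj ih =>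
    rw [Finset.set_biInter_insert, Finset.prod_insert hj, ← ih]
    have hAB : Disjoint ({(j0 : ℤ)} : Set ℤ) {z : ℤ | ∃ j ∈ t, (j : ℤ) = z} := by
      rw [Set.disjoint_left]
      rintro z rfl ⟨j, hjt, hjz⟩
      exact hj (by rwa [show j = j0 from Subtype.ext hjz] at hjt)
    have hind := aux_indep_groups u hmodel hAB
    have h1 : MeasurableSet[MA u {(j0 : ℤ)}] (Su u (j0 : ℤ)) := aux_Su_meas_MA u _ _ rfl
    have h2 : MeasurableSet[MA u {z : ℤ | ∃ j ∈ t, (j : ℤ) = z}] (⋂ j ∈ t, Su u (j : ℤ)) := by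
      refine MeasurableSet.biInter t.countable_toSet (fun j hjt => ?_)
      exact aux_Su_meas_MA u _ _ ⟨j, hjt, rfl⟩
    exact (hind.indepSet_of_measurableSet h1 h2).measure_inter_eq_mul

/-- description of the event `A⁺_{u,v}` and independence. -/
theorem stmt_3 (p : ℕ → ℝ) (hp : ∀ k, 0 ≤ p k ∧ p k < 1)
    (μ : Measure Cfg) (hmodel : GraphModel p μ) (u v : ℤ) (huv : u < v) :
    (∀ ω : Cfg,
      ((∀ j, u < j → j ≤ v → Leads ω u j) ↔
        (∀ j, u < j → j ≤ v → ∃ i, u ≤ i ∧ i < j ∧ Edge ω i j)) ∧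
      ((∀ j, u < j → j ≤ v → Leads ω u j) ↔
        (∀ j, u < j → j ≤ v → 0 < xi ω j ∧ (xi ω j : ℤ) ≤ j - u))) ∧
    iIndepSet
      (fun j : Finset.Ioc u v => {ω : Cfg | ∃ i, u ≤ i ∧ i < (j : ℤ) ∧ Edge ω i (j : ℤ)})
      μ := by
  constructor
  · intro ω
    have hmain : (∀ j, u < j → j ≤ v → Leads ω u j) ↔
        (∀ j, u < j → j ≤ v → ∃ i, u ≤ i ∧ i < j ∧ Edge ω i j) := by
      constructor
      · intro H j huj hjv
        obtain ⟨i, hui, he⟩ := aux_leads_last ω (H j huj hjv)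
        exact ⟨i, hui, he.1, he⟩
      · exact aux_leads_of_edges ω u v
    refine ⟨hmain, hmain.trans ?_⟩
    constructor
    · intro H j huj hjv; exact (aux_xi_iff ω u j huj).mp (H j huj hjv)
    · intro H j huj hjv; exact (aux_xi_iff ω u j huj).mpr (H j huj hjv)
  · show iIndepSet (fun j : Finset.Ioc u v => Su u (j : ℤ)) μ
    rw [iIndepSet_iff_meas_biInter (f := fun j : Finset.Ioc u v => Su u (j : ℤ))
      (fun j => aux_Su_meas u (j : ℤ))]
    exact fun t => aux_prod_formula u v hmodel t
end

section
/- Define the Markov chain on ℤ₊ by x_0 = 0 and x_{n+1} = max(x_n, ξ(−n)) − 1 where ξ(0), ξ(−1), ... are i.i.d. positive integer random variables with 𝔼[ξ] < ∞ and ℙ(ξ = 1) > 0. Then ν = inf{n ≥ 1 : x_n = 0} is almost surely finite. -/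
open MeasureTheory ProbabilityTheory Filter

/-- The Markov chain `x₀ = 0`, `x_{n+1} = max(x_n, ξ(−n)) − 1`. -/
def xchain {Ω : Type*} (ξ : ℕ → Ω → ℕ) : ℕ → Ω → ℕ
  | 0 => fun _ => 0
  | n + 1 => fun ω => max (xchain ξ n ω) (ξ n ω) - 1


lemma xchain_le_iff {Ω : Type*} (ξ : ℕ → Ω → ℕ) (ω : Ω) :
    ∀ n m : ℕ, xchain ξ n ω ≤ m ↔ ∀ k, k < n → ξ k ω ≤ m + (n - k)
  | 0, m => by simp [xchain]
  | n+1, m => by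
    have IH := xchain_le_iff ξ ω n (m+1)
    show max (xchain ξ n ω) (ξ n ω) - 1 ≤ m ↔ _
    rw [Nat.sub_le_iff_le_add, max_le_iff]
    constructor
    · rintro ⟨h1, h2⟩ k hk
      rcases Nat.lt_or_ge k n with hkn | hkn
      · have := IH.mp h1 k hkn; omega
      · have hkn' : k = n := by omega
        subst hkn'; omega
    · intro h
      refine ⟨IH.mpr fun k hk => ?_, ?_⟩
      · have := h k (by omega); omega
      · have := h n (by omega); omega


lemma weier {q : ℕ → ENNReal} (hq : ∀ j, q j ≤ 1) (s : Finset ℕ) :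
    1 - ∑ j ∈ s, q j ≤ ∏ j ∈ s, (1 - q j) := by
  induction s using Finset.induction_on with
  | empty => simp
  | @insert a s ha ih =>
    rw [Finset.prod_insert ha, Finset.sum_insert ha]
    set P := ∏ j ∈ s, (1 - q j) with hP
    have hP1 : P ≤ 1 := Finset.prod_le_one (fun _ _ => zero_le) (fun _ _ => tsub_le_self)
    have hPne : P ≠ ⊤ := (hP1.trans_lt ENNReal.one_lt_top).ne
    calc 1 - (q a + ∑ j ∈ s, q j) = (1 - ∑ j ∈ s, q j) - q a := by
          rw [add_comm, tsub_add_eq_tsub_tsub]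
      _ ≤ P - q a := tsub_le_tsub_right ih _
      _ ≤ P - q a * P := tsub_le_tsub_left (by
            calc q a * P ≤ q a * 1 := mul_le_mul_right hP1 _
              _ = q a := mul_one _) _
      _ = (1 - q a) * P := by rw [ENNReal.sub_mul (fun _ _ => hPne), one_mul]

lemma tsum_ite_lt (m : ℕ) : ∑' j : ℕ, (if j < m then (1:ENNReal) else 0) = m := by
  rw [tsum_eq_sum (s := Finset.range m) (fun j hj => if_neg (by simpa using hj))]
  rw [Finset.sum_congr rfl (fun j hj => if_pos (Finset.mem_range.mp hj))]
  simp

/-- `ν = inf{n ≥ 1 : x_n = 0}` is almost surely finite. -/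
theorem stmt_11 {Ω : Type*} [MeasurableSpace Ω] (μ : Measure Ω)
    [IsProbabilityMeasure μ]
    (ξ : ℕ → Ω → ℕ) (hmeas : ∀ k, Measurable (ξ k))
    (hindep : iIndepFun ξ μ)
    (hident : ∀ k l : ℕ, IdentDistrib (ξ k) (ξ l) μ μ)
    (hpos : ∀ k ω, 1 ≤ ξ k ω)
    (hmean : ∫⁻ ω, (ξ 0 ω : ENNReal) ∂μ < ⊤)
    (hone : 0 < μ {ω | ξ 0 ω = 1}) :
    ∀ᵐ ω ∂μ, ∃ n : ℕ, 1 ≤ n ∧ xchain ξ n ω = 0 := by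
  classical
  -- basic measurability
  have mLe : ∀ k j, MeasurableSet {ω | ξ k ω ≤ j} :=
    fun k j => (hmeas k) (MeasurableSpace.measurableSet_top (s := {m : ℕ | m ≤ j}))
  have mGt : ∀ k j, MeasurableSet {ω | j < ξ k ω} :=
    fun k j => (hmeas k) (MeasurableSpace.measurableSet_top (s := {m : ℕ | j < m}))
  set Pr : ℕ → ENNReal := fun j => μ {ω | ξ 0 ω ≤ j} with hPrdef
  set Qr : ℕ → ENNReal := fun j => μ {ω | j < ξ 0 ω} with hQrdef
  have hPr : ∀ k j, μ {ω | ξ k ω ≤ j} = Pr j := by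
    intro k j
    exact (hident k 0).measure_mem_eq (s := {m : ℕ | m ≤ j}) MeasurableSpace.measurableSet_top
  have hQr : ∀ k j, μ {ω | j < ξ k ω} = Qr j := by
    intro k j
    exact (hident k 0).measure_mem_eq (s := {m : ℕ | j < m}) MeasurableSpace.measurableSet_top
  have hQle1 : ∀ j, Qr j ≤ 1 := fun j => prob_le_one
  have hcompl : ∀ j, Pr j = 1 - Qr j := by
    intro j
    have : {ω | ξ 0 ω ≤ j} = {ω | j < ξ 0 ω}ᶜ := by ext ω; simp [Set.mem_compl_iff, not_lt]
    rw [hPrdef]; simp only [this]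
    rw [measure_compl (mGt 0 j) (measure_ne_top μ _), measure_univ]
  -- summability of tail probabilities
  have hsumQ : ∑' j, Qr j ≠ ⊤ := by
    have h1 : ∀ j, Qr j = ∫⁻ ω, Set.indicator {ω | j < ξ 0 ω} (1 : Ω → ENNReal) ω ∂μ :=
      fun j => (lintegral_indicator_one (mGt 0 j)).symm
    have h2 : ∑' j, Qr j = ∫⁻ ω, (ξ 0 ω : ENNReal) ∂μ := by
      calc ∑' j, Qr j = ∑' j, ∫⁻ ω, Set.indicator {ω | j < ξ 0 ω} (1 : Ω → ENNReal) ω ∂μ :=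
            tsum_congr h1
        _ = ∫⁻ ω, ∑' j, Set.indicator {ω | j < ξ 0 ω} (1 : Ω → ENNReal) ω ∂μ :=
            (lintegral_tsum fun j => ((measurable_one.indicator (mGt 0 j)).aemeasurable)).symm
        _ = ∫⁻ ω, (ξ 0 ω : ENNReal) ∂μ := by
            refine lintegral_congr fun ω => ?_
            have hind : ∀ j : ℕ, Set.indicator {ω' | j < ξ 0 ω'} (1 : Ω → ENNReal) ω
                = if j < ξ 0 ω then 1 else 0 := fun j => by
              by_cases h : j < ξ 0 ω <;> simp [Set.indicator_apply, h]
            rw [tsum_congr hind, tsum_ite_lt (ξ 0 ω)]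
    rw [h2]; exact hmean.ne
  -- tail of the series is small
  obtain ⟨J, hJtail⟩ : ∃ J : ℕ, ∑' j : ℕ, Qr (j + J) ≤ 1/2 := by
    have ht := ENNReal.tendsto_sum_nat_add Qr hsumQ
    have hev : ∀ᶠ i in atTop, (∑' k, Qr (k + i)) < 1/2 :=
      ht.eventually_lt_const (by norm_num)
    rcases eventually_atTop.mp hev with ⟨J0, hJ0⟩
    exact ⟨J0, (hJ0 J0 le_rfl).le⟩
  -- positivity of Pr
  have hPle1 : ∀ j, Pr j ≤ 1 := fun j => prob_le_one
  have hP1pos : 0 < Pr 1 := by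
    refine lt_of_lt_of_le hone (measure_mono ?_)
    intro ω h; simp only [Set.mem_setOf_eq] at h ⊢; omega
  have hPmono : ∀ j, 1 ≤ j → Pr 1 ≤ Pr j := by
    intro j hj
    refine measure_mono ?_
    intro ω h; simp only [Set.mem_setOf_eq] at h ⊢; omega
  set c : ENNReal := Pr 1 ^ J * (1/2) with hcdef
  have hcpos : 0 < c := by
    refine ENNReal.mul_pos (pow_ne_zero _ hP1pos.ne') (by norm_num)
  -- uniform lower bound for the products
  have prodLB : ∀ M : ℕ, c ≤ ∏ j ∈ Finset.Icc 1 M, Pr j := by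
    intro M
    set s := Finset.Icc 1 M with hs
    have hsplit : (∏ j ∈ s.filter (fun j => j < J), Pr j) *
        (∏ j ∈ s.filter (fun j => ¬ j < J), Pr j) = ∏ j ∈ s, Pr j :=
      Finset.prod_filter_mul_prod_filter_not s _ _
    have part1 : Pr 1 ^ J ≤ ∏ j ∈ s.filter (fun j => j < J), Pr j := by
      have hcard : (s.filter (fun j => j < J)).card ≤ J := by
        have hsub : s.filter (fun j => j < J) ⊆ Finset.Ico 1 J := by
          intro j hj
          simp only [Finset.mem_filter, hs, Finset.mem_Icc] at hj
          exact Finset.mem_Ico.mpr ⟨hj.1.1, hj.2⟩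
        calc (s.filter (fun j => j < J)).card ≤ (Finset.Ico 1 J).card :=
              Finset.card_le_card hsub
          _ ≤ J := by rw [Nat.card_Ico]; omega
      calc Pr 1 ^ J ≤ Pr 1 ^ (s.filter (fun j => j < J)).card :=
            pow_le_pow_of_le_one zero_le (hPle1 1) hcard
        _ = ∏ _j ∈ s.filter (fun j => j < J), Pr 1 := (Finset.prod_const _).symm
        _ ≤ ∏ j ∈ s.filter (fun j => j < J), Pr j := by
            refine Finset.prod_le_prod' fun j hj => ?_
            simp only [Finset.mem_filter, hs, Finset.mem_Icc] at hj
            exact hPmono j hj.1.1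
    have part2 : (1/2 : ENNReal) ≤ ∏ j ∈ s.filter (fun j => ¬ j < J), Pr j := by
      set t := s.filter (fun j => ¬ j < J) with htdef
      have htJ : ∀ j ∈ t, J ≤ j := by
        intro j hj; simp only [htdef, Finset.mem_filter] at hj; omega
      have hsum_t : ∑ j ∈ t, Qr j ≤ ∑' i : ℕ, Qr (i + J) := by
        have hinj : ∀ x ∈ t, ∀ y ∈ t, x - J = y - J → x = y := by
          intro x hx y hy h
          have := htJ x hx; have := htJ y hy; omega
        have himg : ∑ i ∈ t.image (fun j => j - J), Qr (i + J) = ∑ j ∈ t, Qr j := by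
          rw [Finset.sum_image hinj]
          exact Finset.sum_congr rfl fun j hj => by rw [Nat.sub_add_cancel (htJ j hj)]
        rw [← himg]
        exact ENNReal.sum_le_tsum _
      have h12 : (1:ENNReal) - 1/2 = 1/2 := by rw [one_div]; exact ENNReal.one_sub_inv_two
      calc (1/2 : ENNReal) = 1 - 1/2 := h12.symm
        _ ≤ 1 - ∑ j ∈ t, Qr j := tsub_le_tsub_left (hsum_t.trans hJtail) _
        _ ≤ ∏ j ∈ t, (1 - Qr j) := weier hQle1 t
        _ = ∏ j ∈ t, Pr j := Finset.prod_congr rfl fun j _ => (hcompl j).symm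
    calc c ≤ (∏ j ∈ s.filter (fun j => j < J), Pr j) *
        (∏ j ∈ s.filter (fun j => ¬ j < J), Pr j) := mul_le_mul' part1 part2
      _ = ∏ j ∈ s, Pr j := hsplit
  -- block events
  set D : ℕ → Set Ω := fun m =>
    ⋂ k ∈ Finset.Ico (2^m) (2^(m+1)), {ω | ξ k ω ≤ 2^(m+1) - k} with hDdef
  have hDmeas : ∀ m, MeasurableSet (D m) := by
    intro m
    exact Finset.measurableSet_biInter _ fun k _ => mLe k _
  have hDlb : ∀ m, c ≤ μ (D m) := by
    intro m
    have hmeasD : μ (D m) = ∏ k ∈ Finset.Ico (2^m) (2^(m+1)), Pr (2^(m+1) - k) := by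
      rw [hDdef]
      rw [hindep.meas_biInter (S := Finset.Ico (2^m) (2^(m+1)))
        (s := fun k => {ω | ξ k ω ≤ 2^(m+1) - k})
        (fun k _ => MeasurableSpace.measurableSet_comap.mpr
          ⟨{x | x ≤ 2^(m+1) - k}, MeasurableSpace.measurableSet_top, rfl⟩)]
      exact Finset.prod_congr rfl fun k _ => hPr k _
    have hreidx : ∏ k ∈ Finset.Ico (2^m) (2^(m+1)), Pr (2^(m+1) - k)
        = ∏ j ∈ Finset.Icc 1 (2^m), Pr j := by
      have h2 : 2^(m+1) = 2 * 2^m := by rw [pow_succ]; ring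
      refine Finset.prod_nbij' (fun k => 2^(m+1) - k) (fun j => 2^(m+1) - j)
        ?_ ?_ ?_ ?_ ?_
      · intro k hk; simp only [Finset.mem_Ico] at hk
        simp only [Finset.mem_Icc]; omega
      · intro j hj; simp only [Finset.mem_Icc] at hj
        simp only [Finset.mem_Ico]; omega
      · intro k hk; simp only [Finset.mem_Ico] at hk; omega
      · intro j hj; simp only [Finset.mem_Icc] at hj; omega
      · intro k _; rfl
    rw [hmeasD, hreidx]
    exact prodLB _
  -- the i.o. event
  set U : ℕ → Set Ω := fun N => ⋃ m, ⋃ (_ : N ≤ m), D m with hUdef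
  have hUmeas : ∀ N, MeasurableSet (U N) :=
    fun N => MeasurableSet.iUnion fun m => MeasurableSet.iUnion fun _ => hDmeas m
  have hUanti : Antitone U := by
    intro N N' h ω hω
    simp only [hUdef, Set.mem_iUnion] at hω ⊢
    obtain ⟨m, hm, hωm⟩ := hω
    exact ⟨m, le_trans h hm, hωm⟩
  have hDU : ∀ N, D N ⊆ U N := by
    intro N ω hω
    simp only [hUdef, Set.mem_iUnion]
    exact ⟨N, le_rfl, hω⟩
  set A : Set Ω := ⋂ N, U N with hAdef
  have hAmeas : MeasurableSet A := MeasurableSet.iInter fun N => hUmeas N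
  -- lower bound on μ A
  have hAlb : c ≤ μ A := by
    have htends := tendsto_measure_iInter_atTop
      (fun N => (hUmeas N).nullMeasurableSet) hUanti ⟨0, measure_ne_top μ _⟩
    exact ge_of_tendsto' htends fun N => le_trans (hDlb N) (measure_mono (hDU N))
  -- Kolmogorov 0-1 law
  have h01 : μ A = 0 ∨ μ A = 1 := by
    refine measure_zero_or_one_of_measurableSet_limsup_atTop
      (s := fun k => (⊤ : MeasurableSpace ℕ).comap (ξ k))
      (fun k => (hmeas k).comap_le) hindep.iIndep ?_
    rw [limsup_eq_iInf_iSup_of_nat, MeasurableSpace.measurableSet_iInf]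
    intro n
    have hA' : A = ⋂ N, U (N + n) := by
      apply subset_antisymm
      · exact fun ω hω => Set.mem_iInter.mpr fun N => Set.mem_iInter.mp hω (N + n)
      · exact fun ω hω => Set.mem_iInter.mpr fun N =>
          hUanti (Nat.le_add_right N n) (Set.mem_iInter.mp hω N)
    rw [hA']
    refine MeasurableSet.iInter fun N => ?_
    refine MeasurableSet.iUnion fun m => ?_
    refine MeasurableSet.iUnion fun hm => ?_
    rw [hDdef]
    refine Finset.measurableSet_biInter _ fun k hk => ?_
    simp only [Finset.mem_Ico] at hk
    have hnk : n ≤ k := by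
      have h2m : m < 2^m := Nat.lt_two_pow_self
      omega
    have hle : (⊤ : MeasurableSpace ℕ).comap (ξ k)
        ≤ ⨆ i, ⨆ (_ : n ≤ i), (⊤ : MeasurableSpace ℕ).comap (ξ i) :=
      le_iSup₂ (f := fun i (_ : n ≤ i) => (⊤ : MeasurableSpace ℕ).comap (ξ i)) k hnk
    exact hle _ (MeasurableSpace.measurableSet_comap.mpr
      ⟨{x | x ≤ 2^(m+1) - k}, MeasurableSpace.measurableSet_top, rfl⟩)
  have hA1 : μ A = 1 := by
    refine h01.resolve_left fun h0 => ?_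
    rw [h0] at hAlb
    exact hcpos.ne' (le_zero_iff.mp hAlb)
  -- Borel-Cantelli I: eventually ξ k ω ≤ k
  have hBC : ∀ᵐ ω ∂μ, ∀ᶠ k in atTop, ω ∉ {ω' | k < ξ k ω'} := by
    refine ae_eventually_notMem ?_
    have : ∀ k : ℕ, μ {ω | k < ξ k ω} = Qr k := fun k => hQr k k
    rw [tsum_congr this]
    exact hsumQ
  have hAae : ∀ᵐ ω ∂μ, ω ∈ A := by
    rw [ae_iff]
    have : {ω | ¬ ω ∈ A} = Aᶜ := rfl
    rw [this, measure_compl hAmeas (measure_ne_top μ _), hA1, measure_univ, tsub_self]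
  -- conclusion
  filter_upwards [hAae, hBC] with ω hωA hωE
  obtain ⟨K, hK⟩ := eventually_atTop.mp hωE
  set B := (Finset.range K).sup (fun k => ξ k ω + k) with hBdef
  obtain ⟨m, hmB, hωD⟩ : ∃ m, B ≤ m ∧ ω ∈ D m := by
    have := Set.mem_iInter.mp hωA B
    simp only [hUdef, Set.mem_iUnion] at this
    obtain ⟨m, hm, h⟩ := this
    exact ⟨m, hm, h⟩
  have h2m : m < 2^m := Nat.lt_two_pow_self
  have hpow : 2^(m+1) = 2 * 2^m := by rw [pow_succ]; ring
  refine ⟨2^(m+1), Nat.one_le_two_pow, ?_⟩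
  rw [← Nat.le_zero, xchain_le_iff]
  intro k hk
  simp only [Nat.zero_add]
  rcases Nat.lt_or_ge k K with hkK | hkK
  · have hkB : ξ k ω + k ≤ B :=
      Finset.le_sup (f := fun k => ξ k ω + k) (Finset.mem_range.mpr hkK)
    omega
  · rcases Nat.lt_or_ge k (2^m) with hk2 | hk2
    · have : ¬ k < ξ k ω := hK k hkK
      omega
    · have hmem : ω ∈ {ω' | ξ k ω' ≤ 2^(m+1) - k} := by
        have := Set.mem_iInter₂.mp hωD k (Finset.mem_Ico.mpr ⟨hk2, hk⟩)
        exact this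
      exact hmem
end

section
/- If two skeleton points Γ and Γ' with Γ < Γ' are given, then T[Γ, Γ'] = L[Γ, Γ']: the longest path between the two skeleton points equals the longest path in the restricted graph on {Γ, ..., Γ'}, and any maximal path in this restriction starts at Γ and ends at Γ'. -/
open MeasureTheory ProbabilityTheory Filter

lemma leads_lt {ω : Cfg} {i j : ℤ} (h : Leads ω i j) : i < j := by
  induction h with
  | single h => exact h.1
  | tail _ h ih => exact ih.trans h.1

lemma chain'_lt {ω : Cfg} {l : List ℤ} (h : l.Chain' (Edge ω)) : l.Chain' (· < ·) :=
  List.IsChain.imp (fun a b hab => hab.1) h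

lemma mem_le_getLast {l : List ℤ} (h : l.Chain' (· < ·)) {b z : ℤ}
    (hb : l.getLast? = some b) (hz : z ∈ l) : z ≤ b := by
  have hp : l.reverse.Pairwise (fun x y => y < x) := by
    rw [List.pairwise_reverse]
    exact List.isChain_iff_pairwise.mp h
  have hzr : z ∈ l.reverse := List.mem_reverse.mpr hz
  have hh : l.reverse.head? = some b := by rw [List.head?_reverse, hb]
  cases hr : l.reverse with
  | nil => simp [hr] at hzr
  | cons c t =>
    rw [hr] at hh hzr hp
    simp only [List.head?_cons, Option.some_inj] at hh
    subst hh
    rcases List.mem_cons.mp hzr with rfl | hz'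
    · exact le_refl _
    · exact le_of_lt (List.rel_of_pairwise_cons hp hz')

lemma head_le_mem {l : List ℤ} (h : l.Chain' (· < ·)) {a z : ℤ}
    (ha : l.head? = some a) (hz : z ∈ l) : a ≤ z := by
  have hp : l.Pairwise (· < ·) := List.isChain_iff_pairwise.mp h
  cases l with
  | nil => simp at ha
  | cons c t =>
    simp only [List.head?_cons, Option.some_inj] at ha
    subst ha
    rcases List.mem_cons.mp hz with rfl | hz'
    · exact le_refl _
    · exact le_of_lt (List.rel_of_pairwise_cons hp hz')

lemma length_le_of_bounds {l : List ℤ} (h : l.Chain' (· < ·)) {a b : ℤ}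
    (hm : ∀ x ∈ l, a ≤ x ∧ x ≤ b) : l.length ≤ (b - a).toNat + 1 := by
  have hnd : l.Nodup := ((List.isChain_iff_pairwise.mp h)).nodup
  have h1 : l.toFinset.card = l.length := List.toFinset_card_of_nodup hnd
  have h2 : l.toFinset ⊆ Finset.Icc a b := by
    intro x hx
    rw [List.mem_toFinset] at hx
    exact Finset.mem_Icc.mpr (hm x hx)
  have h3 := Finset.card_le_card h2
  rw [Int.card_Icc] at h3
  omega

lemma leads_prepend {ω : Cfg} {x a : ℤ} (h : Leads ω x a) :
    ∀ l : List ℤ, l.Chain' (Edge ω) → l.head? = some a →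
    ∃ l' : List ℤ, l'.Chain' (Edge ω) ∧ l'.head? = some x ∧ l'.getLast? = l.getLast? ∧
      l.length < l'.length ∧ ∀ z ∈ l', z ∈ l ∨ (x ≤ z ∧ z < a) := by
  induction h using Relation.TransGen.head_induction_on with
  | single hxa =>
    rename_i x'
    intro l hc hh
    refine ⟨x' :: l, List.isChain_cons.mpr ⟨?_, hc⟩, rfl, ?_, by simp, ?_⟩
    · intro y hy; rw [hh] at hy; simp at hy; subst hy; exact hxa
    · cases l with
      | nil => simp at hh
      | cons c t => rfl
    · intro z hz
      rcases List.mem_cons.mp hz with rfl | hz'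
      · exact Or.inr ⟨le_refl _, hxa.1⟩
      · exact Or.inl hz'
  | head hxb hba ih =>
    rename_i x' b'
    intro l hc hh
    obtain ⟨l', h1, h2, h3, h4, h5⟩ := ih l hc hh
    refine ⟨x' :: l', List.isChain_cons.mpr ⟨?_, h1⟩, rfl, ?_, by simp; omega, ?_⟩
    · intro y hy; rw [h2] at hy; simp at hy; subst hy; exact hxb
    · cases l' with
      | nil => simp at h2
      | cons c t => rw [h3.symm]; rfl
    · intro z hz
      rcases List.mem_cons.mp hz with rfl | hz'
      · exact Or.inr ⟨le_refl _, hxb.1.trans (leads_lt hba)⟩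
      · rcases h5 z hz' with h | ⟨hl, hr⟩
        · exact Or.inl h
        · exact Or.inr ⟨le_of_lt (lt_of_lt_of_le hxb.1 hl), hr⟩

lemma leads_append {ω : Cfg} {b y : ℤ} (h : Leads ω b y) :
    ∀ l : List ℤ, l.Chain' (Edge ω) → l.getLast? = some b →
    ∃ l' : List ℤ, l'.Chain' (Edge ω) ∧ l'.head? = l.head? ∧ l'.getLast? = some y ∧
      l.length < l'.length ∧ ∀ z ∈ l', z ∈ l ∨ (b < z ∧ z ≤ y) := by
  induction h with
  | single hby =>
    rename_i y'
    intro l hc hl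
    have hne : l ≠ [] := by intro h'; rw [h'] at hl; simp at hl
    refine ⟨l ++ [y'], hc.append (List.isChain_singleton y') ?_, ?_, ?_, by simp, ?_⟩
    · intro p hp q hq
      rw [hl] at hp; simp at hp hq; subst hp; subst hq; exact hby
    · rw [List.head?_append_of_ne_nil _ hne]
    · simp
    · intro z hz
      rcases List.mem_append.mp hz with h | h
      · exact Or.inl h
      · simp at h; subst h; exact Or.inr ⟨hby.1, le_refl _⟩
  | tail hbc hcy ih =>
    rename_i b' c
    intro l hc hl
    obtain ⟨l', h1, h2, h3, h4, h5⟩ := ih l hc hl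
    have hne' : l' ≠ [] := by intro h'; rw [h'] at h3; simp at h3
    refine ⟨l' ++ [c], h1.append (List.isChain_singleton c) ?_, ?_, ?_, by simp; omega, ?_⟩
    · intro p hp q hq
      rw [h3] at hp; simp at hp hq; subst hp; subst hq; exact hcy
    · rw [List.head?_append_of_ne_nil _ hne', h2]
    · simp
    · intro z hz
      rcases List.mem_append.mp hz with h | h
      · rcases h5 z h with h' | ⟨hl', hr'⟩
        · exact Or.inl h'
        · exact Or.inr ⟨hl', hr'.trans (le_of_lt hcy.1)⟩
      · simp at h; subst h
        exact Or.inr ⟨(leads_lt hbc).trans hcy.1, le_refl _⟩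

/-- between two skeleton points `Γ < Γ'`, `T[Γ,Γ'] = L[Γ,Γ']`,
and any maximal path in the restriction starts at `Γ` and ends at `Γ'`. -/
theorem stmt_19 (ω : Cfg) (Γ Γ' : ℤ) (hΓ : Γ ∈ Skel ω) (hΓ' : Γ' ∈ Skel ω)
    (hlt : Γ < Γ') :
    T ω Γ Γ' = L ω Γ Γ' ∧
    ∀ l : List ℤ, IsPathIn ω Γ Γ' l → l.length = L ω Γ Γ' + 1 →
      l.head? = some Γ ∧ l.getLast? = some Γ' := by
  obtain ⟨hΓup, hΓdn⟩ := hΓ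
  obtain ⟨hΓ'up, hΓ'dn⟩ := hΓ'
  set SL := {n : ℕ | ∃ l : List ℤ, IsPathIn ω Γ Γ' l ∧ l.length = n + 1} with hSLdef
  set ST := {n : ℕ | ∃ l : List ℤ, l.Chain' (Edge ω) ∧ l.head? = some Γ ∧
    l.getLast? = some Γ' ∧ l.length = n + 1} with hSTdef
  have hLdef : L ω Γ Γ' = sSup SL := rfl
  have hTdef : T ω Γ Γ' = sSup ST := rfl
  have hbddL : BddAbove SL := by
    refine ⟨(Γ' - Γ).toNat, fun n hn => ?_⟩
    obtain ⟨l, ⟨hne, hc, hm⟩, hlen⟩ := hn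
    have := length_le_of_bounds (chain'_lt hc) hm
    omega
  have hbddT : BddAbove ST := by
    refine ⟨(Γ' - Γ).toNat, fun n hn => ?_⟩
    obtain ⟨l, hc, hh, hg, hlen⟩ := hn
    have hm : ∀ x ∈ l, Γ ≤ x ∧ x ≤ Γ' := fun x hx =>
      ⟨head_le_mem (chain'_lt hc) hh hx, mem_le_getLast (chain'_lt hc) hg hx⟩
    have := length_le_of_bounds (chain'_lt hc) hm
    omega
  have hsub : ST ⊆ SL := by
    intro n hn
    obtain ⟨l, hc, hh, hg, hlen⟩ := hn
    refine ⟨l, ⟨?_, hc, fun x hx =>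
      ⟨head_le_mem (chain'_lt hc) hh hx, mem_le_getLast (chain'_lt hc) hg hx⟩⟩, hlen⟩
    intro h'; rw [h'] at hh; simp at hh
  have hTne : ST.Nonempty := by
    obtain ⟨l', h1, h2, h3, h4, _⟩ :=
      leads_append (hΓup Γ' hlt) ([Γ]) (List.isChain_singleton Γ) rfl
    exact ⟨l'.length - 1, l', h1, by simpa using h2, h3, by simp at h4 ⊢; omega⟩
  have hLne : (0 : ℕ) ∈ SL :=
    ⟨[Γ], ⟨by simp, List.isChain_singleton Γ, by simp [le_of_lt hlt]⟩, rfl⟩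
  have hLmem : L ω Γ Γ' ∈ SL := by rw [hLdef]; exact Nat.sSup_mem ⟨0, hLne⟩ hbddL
  have key : ∀ l : List ℤ, IsPathIn ω Γ Γ' l → l.length = L ω Γ Γ' + 1 →
      l.head? = some Γ ∧ l.getLast? = some Γ' := by
    intro l hP hlen
    obtain ⟨hne, hc, hm⟩ := hP
    obtain ⟨a, ha⟩ : ∃ a, l.head? = some a := by
      cases l with
      | nil => exact absurd rfl hne
      | cons c t => exact ⟨c, rfl⟩
    obtain ⟨b, hb⟩ : ∃ b, l.getLast? = some b :=
      ⟨l.getLast hne, List.getLast?_eq_getLast_of_ne_nil hne⟩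
    have haM : a ∈ l := by
      have := List.eq_cons_of_mem_head? (x := a) (l := l) (by rw [ha]; rfl)
      rw [this]; exact List.mem_cons_self
    have hbM : b ∈ l := by
      obtain ⟨h', h''⟩ := List.mem_getLast?_eq_getLast (x := b) (l := l) (by rw [hb]; rfl)
      rw [h'']; exact List.getLast_mem h'
    have hha : a = Γ := by
      by_contra hne'
      have hlt' : Γ < a := lt_of_le_of_ne (hm a haM).1 (Ne.symm hne')
      obtain ⟨l', h1, h2, h3, h4, h5⟩ := leads_prepend (hΓup a hlt') l hc ha
      have hmem : l'.length - 1 ∈ SL := by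
        refine ⟨l', ⟨?_, h1, ?_⟩, ?_⟩
        · intro h'; rw [h'] at h2; simp at h2
        · intro z hz
          rcases h5 z hz with h | ⟨h6, h7⟩
          · exact hm z h
          · exact ⟨h6, le_of_lt (lt_of_lt_of_le h7 (hm a haM).2)⟩
        · omega
      have := le_csSup hbddL hmem
      rw [← hLdef] at this
      omega
    have hhb : b = Γ' := by
      by_contra hne'
      have hlt' : b < Γ' := lt_of_le_of_ne (hm b hbM).2 hne'
      obtain ⟨l', h1, h2, h3, h4, h5⟩ := leads_append (hΓ'dn b hlt') l hc hb
      have hmem : l'.length - 1 ∈ SL := by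
        refine ⟨l', ⟨?_, h1, ?_⟩, ?_⟩
        · intro h'; rw [h'] at h3; simp at h3
        · intro z hz
          rcases h5 z hz with h | ⟨h6, h7⟩
          · exact hm z h
          · exact ⟨le_of_lt (lt_of_le_of_lt (hm b hbM).1 h6), h7⟩
        · omega
      have := le_csSup hbddL hmem
      rw [← hLdef] at this
      omega
    rw [hha] at ha; rw [hhb] at hb
    exact ⟨ha, hb⟩
  refine ⟨le_antisymm ?_ ?_, key⟩
  · rw [hLdef, hTdef]
    exact csSup_le_csSup hbddL hTne hsub
  · obtain ⟨l, hP, hlen⟩ := hLmem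
    obtain ⟨hh, hg⟩ := key l hP hlen
    have : L ω Γ Γ' ∈ ST := ⟨l, hP.2.1, hh, hg, hlen⟩
    rw [hTdef]
    exact le_csSup hbddT this
end
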